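/- Let L > 0 and f : [0,L] → ℝ be twice continuously differentiable. Then for every x ∈ (0,L), |f'(x)| ≤ (9/L²)·∫₀ᴸ |f(t)| dt + ∫₀ᴸ |f''(t)| dt. -/

import Mathlib

open intervalIntegral Set

lemma aux_abs_int (g : ℝ → ℝ) (hg : Continuous g) (L a b : ℝ) (ha : a ∈ Set.Icc 0 L)
    (hb : b ∈ Set.Icc 0 L) : |∫ t in a..b, g t| ≤ ∫ t in (0:ℝ)..L, |g t| := by
  have hint : IntervalIntegrable (fun t => |g t|) MeasureTheory.volume 0 L :=
    (hg.abs).intervalIntegrable 0 L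
  have key : ∀ c d : ℝ, c ≤ d → c ∈ Set.Icc 0 L → d ∈ Set.Icc 0 L →
      |∫ t in c..d, g t| ≤ ∫ t in (0:ℝ)..L, |g t| := by
    intro c d hcd hc hd
    calc |∫ t in c..d, g t| ≤ ∫ t in c..d, |g t| :=
          intervalIntegral.abs_integral_le_integral_abs hcd
      _ ≤ ∫ t in (0:ℝ)..L, |g t| := by
          apply intervalIntegral.integral_mono_interval hc.1 hcd hd.2 _ hint
          filter_upwards with t using abs_nonneg _
  rcases le_total a b with h | h
  · exact key a b h ha hb
  · rw [intervalIntegral.integral_symm]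
    rw [abs_neg]
    exact key b a h hb ha

theorem stmt_0 (L : ℝ) (hL : 0 < L) (f : ℝ → ℝ) (hf : ContDiff ℝ 2 f) :
    ∀ x ∈ Set.Ioo (0:ℝ) L,
      |deriv f x| ≤ (9 / L ^ 2) * (∫ t in (0:ℝ)..L, |f t|) +
        ∫ t in (0:ℝ)..L, |deriv (deriv f) t| := by
  intro x hx
  have hf2 : ContDiff ℝ ((1:WithTop ℕ∞) + 1) f := by
    convert hf using 2
    norm_num
  have hf1 : ContDiff ℝ 1 (deriv f) := (contDiff_succ_iff_deriv.mp hf2).2.2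
  have hdf : Differentiable ℝ f := hf.differentiable (by norm_num)
  have hcf : Continuous f := hf.continuous
  have hcf' : Continuous (deriv f) := hf1.continuous
  have hcf'' : Continuous (deriv (deriv f)) := hf1.continuous_deriv le_rfl
  have hdf' : Differentiable ℝ (deriv f) := hf1.differentiable one_ne_zero
  -- min of |f| on [0, L/3]
  have h13 : (0:ℝ) ≤ L / 3 := by linarith
  have h23 : (2 * L / 3 : ℝ) ≤ L := by linarith
  obtain ⟨ξ, hξ, hξmin⟩ := (isCompact_Icc (a := (0:ℝ)) (b := L/3)).exists_isMinOn
    (Set.nonempty_Icc.mpr h13) (hcf.abs.continuousOn)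
  obtain ⟨η, hη, hηmin⟩ := (isCompact_Icc (a := (2*L/3:ℝ)) (b := L)).exists_isMinOn
    (Set.nonempty_Icc.mpr h23) (hcf.abs.continuousOn)
  -- averages
  have hA1 : |f ξ| * (L / 3) ≤ ∫ t in (0:ℝ)..(L/3), |f t| := by
    have : ∫ t in (0:ℝ)..(L/3), |f ξ| ≤ ∫ t in (0:ℝ)..(L/3), |f t| := by
      apply intervalIntegral.integral_mono_on h13 (intervalIntegrable_const)
        (hcf.abs.intervalIntegrable 0 (L/3))
      intro t ht
      exact hξmin ht
    simpa [mul_comm] using this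
  have hA2 : |f η| * (L / 3) ≤ ∫ t in (2*L/3:ℝ)..L, |f t| := by
    have h23' : (2*L/3:ℝ) ≤ L := h23
    have : ∫ t in (2*L/3:ℝ)..L, |f η| ≤ ∫ t in (2*L/3:ℝ)..L, |f t| := by
      apply intervalIntegral.integral_mono_on h23' (intervalIntegrable_const)
        (hcf.abs.intervalIntegrable _ _)
      intro t ht
      exact hηmin ht
    have heq : ∫ t in (2*L/3:ℝ)..L, |f η| = |f η| * (L / 3) := by
      rw [intervalIntegral.integral_const, smul_eq_mul]
      ring
    linarith [this, heq ▸ this]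
  -- sum of subinterval integrals ≤ total
  have hsplit : (∫ t in (0:ℝ)..(L/3), |f t|) + (∫ t in (2*L/3:ℝ)..L, |f t|)
      ≤ ∫ t in (0:ℝ)..L, |f t| := by
    have e1 : (∫ t in (0:ℝ)..(L/3), |f t|) + (∫ t in (L/3:ℝ)..L, |f t|)
        = ∫ t in (0:ℝ)..L, |f t| :=
      intervalIntegral.integral_add_adjacent_intervals
        (hcf.abs.intervalIntegrable _ _) (hcf.abs.intervalIntegrable _ _)
    have e2 : (∫ t in (L/3:ℝ)..(2*L/3), |f t|) + (∫ t in (2*L/3:ℝ)..L, |f t|)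
        = ∫ t in (L/3:ℝ)..L, |f t| :=
      intervalIntegral.integral_add_adjacent_intervals
        (hcf.abs.intervalIntegrable _ _) (hcf.abs.intervalIntegrable _ _)
    have hmid : 0 ≤ ∫ t in (L/3:ℝ)..(2*L/3), |f t| := by
      apply intervalIntegral.integral_nonneg (by linarith)
      intro t _; exact abs_nonneg _
    linarith
  -- MVT
  have hξη : ξ < η := by
    have := hξ.2; have := hη.1; nlinarith [hξ.2, hη.1]
  obtain ⟨lam, hlam, hlamval⟩ := exists_deriv_eq_slope f hξη hcf.continuousOn
    (hdf.differentiableOn)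
  -- bound on |f' lam|
  have hηξ : L / 3 ≤ η - ξ := by
    have := hξ.2; have := hη.1; linarith
  have hslope : |deriv f lam| * (η - ξ) ≤ |f η| + |f ξ| := by
    rw [hlamval, abs_div, abs_of_pos (by linarith : (0:ℝ) < η - ξ),
      div_mul_cancel₀ _ (by linarith : (η - ξ) ≠ 0)]
    exact (abs_sub _ _)
  -- FTC: deriv f x - deriv f lam = ∫ f''
  have hftc : deriv f x - deriv f lam = ∫ t in lam..x, deriv (deriv f) t := by
    rw [intervalIntegral.integral_deriv_eq_sub (fun t _ => hdf' t)
      (hcf''.intervalIntegrable _ _)]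
  have hlam01 : lam ∈ Set.Icc (0:ℝ) L := by
    constructor
    · linarith [hlam.1, hξ.1]
    · linarith [hlam.2, hη.2]
  have hB : |deriv f x - deriv f lam| ≤ ∫ t in (0:ℝ)..L, |deriv (deriv f) t| := by
    rw [hftc]
    exact aux_abs_int _ hcf'' L lam x hlam01 ⟨le_of_lt hx.1, le_of_lt hx.2⟩
  -- combine
  set A := ∫ t in (0:ℝ)..L, |f t| with hA
  have hA1' := hA1
  have hA2' := hA2
  have hlampos : 0 ≤ |deriv f lam| := abs_nonneg _
  have hlamB : |deriv f lam| ≤ 9 / L ^ 2 * A := by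
    have h1 : |deriv f lam| * (L / 3) ≤ |f η| + |f ξ| := by
      nlinarith [hslope, hηξ, hlampos]
    have h2 : (|f η| + |f ξ|) * (L / 3) ≤ A := by
      nlinarith [hA1, hA2, hsplit]
    rw [div_mul_eq_mul_div, le_div_iff₀ (by positivity : (0:ℝ) < L ^ 2)]
    nlinarith [h1, h2, abs_nonneg (f η), abs_nonneg (f ξ)]
  calc |deriv f x| ≤ |deriv f lam| + |deriv f x - deriv f lam| := by
        have := abs_sub_abs_le_abs_sub (deriv f x) (deriv f lam); linarith [abs_nonneg (deriv f x - deriv f lam)]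
    _ ≤ 9 / L ^ 2 * A + ∫ t in (0:ℝ)..L, |deriv (deriv f) t| := add_le_add hlamB hB
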